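/- In the setting of the Puiseux expansion construction, let 𝒜_{j,β} be the subring of the Mal'cev-Neumann ring generated by all open truncations u_{j'}(β') with (j',β') <_lex (j,β). If g ∈ 𝒜_{j,β}[u_j(β)] and λ ∈ Γ₁ with v(g) < λ, then the open truncation g(λ) again lies in 𝒜_{j,β}[u_j(β)]. -/

import Mathlib

/-- The open truncation `f(β) = ∑_{γ < β} a_γ t^γ` of a generalized power series. -/
noncomputable def truncLT {Γ A : Type*} [AddCommGroup Γ] [LinearOrder Γ] [IsOrderedAddMonoid Γ] [CommRing A]
    (f : HahnSeries Γ A) (β : Γ) : HahnSeries Γ A where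
  coeff γ := if γ < β then f.coeff γ else 0
  isPWO_support' := f.isPWO_support.mono (fun γ hγ => by
    by_cases h : γ < β
    · simpa [Function.mem_support, h] using hγ
    · simp [Function.mem_support, h] at hγ)

section TruncAux

variable {Γ A : Type*} [AddCommGroup Γ] [LinearOrder Γ] [IsOrderedAddMonoid Γ] [CommRing A]

@[simp] lemma truncLT_coeff (f : HahnSeries Γ A) (β γ : Γ) :
    (truncLT f β).coeff γ = if γ < β then f.coeff γ else 0 := rfl

lemma truncLT_add (f g : HahnSeries Γ A) (β : Γ) :
    truncLT (f + g) β = truncLT f β + truncLT g β := by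
  ext γ
  simp only [truncLT_coeff, HahnSeries.coeff_add]
  split <;> simp

lemma truncLT_sub (f g : HahnSeries Γ A) (β : Γ) :
    truncLT (f - g) β = truncLT f β - truncLT g β := by
  ext γ
  simp only [truncLT_coeff, HahnSeries.coeff_sub]
  split <;> simp

lemma truncLT_zero (β : Γ) : truncLT (0 : HahnSeries Γ A) β = 0 := by
  ext γ
  simp [truncLT_coeff]

lemma truncLT_truncLT (f : HahnSeries Γ A) (β μ : Γ) :
    truncLT (truncLT f β) μ = truncLT f (min β μ) := by
  ext γ
  simp only [truncLT_coeff, lt_min_iff]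
  split_ifs with h1 h2 h3 h3 <;> tauto

lemma truncLT_eq_self {f : HahnSeries Γ A} {β : Γ} (h : ∀ γ ∈ f.support, γ < β) :
    truncLT f β = f := by
  ext γ
  simp only [truncLT_coeff]
  split_ifs with hγ
  · rfl
  · by_contra hne
    exact hγ (h γ (by simpa [HahnSeries.mem_support] using fun h0 => hne h0.symm))

lemma truncLT_eq_zero {f : HahnSeries Γ A} {β : Γ} (h : ∀ γ ∈ f.support, β ≤ γ) :
    truncLT f β = 0 := by
  ext γ
  simp only [truncLT_coeff, HahnSeries.coeff_zero]
  split_ifs with hγ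
  · by_contra hne
    exact absurd (h γ (by simpa [HahnSeries.mem_support] using hne)) (not_le.2 hγ)
  · rfl

lemma support_truncLT (f : HahnSeries Γ A) (β : Γ) :
    (truncLT f β).support ⊆ f.support ∩ {γ | γ < β} := by
  intro γ hγ
  simp only [HahnSeries.mem_support, truncLT_coeff] at hγ
  by_cases h : γ < β
  · exact ⟨by simpa [HahnSeries.mem_support, h] using hγ, h⟩
  · simp [h] at hγ

lemma support_sub_truncLT (f : HahnSeries Γ A) (β : Γ) :
    (f - truncLT f β).support ⊆ f.support ∩ {γ | β ≤ γ} := by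
  intro γ hγ
  simp only [HahnSeries.mem_support, HahnSeries.coeff_sub, truncLT_coeff] at hγ
  by_cases h : γ < β
  · simp [h] at hγ
  · refine ⟨by simpa [HahnSeries.mem_support, h] using hγ, not_lt.1 h⟩

variable (S : Set (HahnSeries Γ A))

/-- One peeling step: either the truncation of the product is directly in the closure, or the
problem reduces to a pair whose second member has support strictly below an element `c` of the
support of `h`. -/
lemma trunc_peel (lam : Γ) (f h : HahnSeries Γ A)
    (hf1 : f ∈ Subring.closure S) (hf2 : ∀ μ, truncLT f μ ∈ Subring.closure S)
    (hh1 : h ∈ Subring.closure S) (hh2 : ∀ μ, truncLT h μ ∈ Subring.closure S) :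
    truncLT (f * h) lam ∈ Subring.closure S ∨
    ∃ f' h' c, c ∈ h.support ∧
      (f' ∈ Subring.closure S) ∧ (∀ μ, truncLT f' μ ∈ Subring.closure S) ∧
      (h' ∈ Subring.closure S) ∧ (∀ μ, truncLT h' μ ∈ Subring.closure S) ∧
      h'.support ⊆ h.support ∧ (∀ b ∈ h'.support, b < c) ∧
      (truncLT (f' * h') lam ∈ Subring.closure S → truncLT (f * h) lam ∈ Subring.closure S) := by
  classical
  set Bad : Set Γ := {a | a ∈ f.support ∧ ∃ b ∈ h.support, lam ≤ a + b} with hBad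
  have hBadwf : Bad.IsWF := f.isWF_support.mono (fun a ha => ha.1)
  by_cases hB : Bad.Nonempty
  · -- peel off the leading part of `f`
    set m : Γ := hBadwf.min hB with hm
    obtain ⟨hmf, bw, hbw, hlamw⟩ := hBadwf.min_mem hB
    set Cs : Set Γ := {b | b ∈ h.support ∧ lam - m ≤ b} with hCs
    have hCswf : Cs.IsWF := h.isWF_support.mono (fun b hb => hb.1)
    have hCne : Cs.Nonempty := ⟨bw, hbw, by rwa [sub_le_iff_le_add']⟩
    set c : Γ := hCswf.min hCne with hc
    obtain ⟨hch, hlamc⟩ := hCswf.min_mem hCne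
    set f₀ : HahnSeries Γ A := truncLT f m with hf₀
    set f₁ : HahnSeries Γ A := f - f₀ with hf₁
    set h₀ : HahnSeries Γ A := truncLT h c with hh₀
    -- the key identity
    have hsplit : f * h = f₀ * h + f₁ * h₀ + f₁ * (h - h₀) := by ring
    have ht0 : truncLT (f₀ * h) lam = f₀ * h := by
      apply truncLT_eq_self
      intro γ hγ
      obtain ⟨a, ha, b, hb, rfl⟩ := Set.mem_add.1 (HahnSeries.support_mul_subset hγ)
      obtain ⟨haf, ham⟩ := support_truncLT f m ha
      have hnotbad : a ∉ Bad := fun hab => hBadwf.not_lt_min hB hab ham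
      have : ¬ ∃ b ∈ h.support, lam ≤ a + b := fun hex => hnotbad ⟨haf, hex⟩
      push_neg at this
      exact this b hb
    have ht2 : truncLT (f₁ * (h - h₀)) lam = 0 := by
      apply truncLT_eq_zero
      intro γ hγ
      obtain ⟨a, ha, b, hb, rfl⟩ := Set.mem_add.1 (HahnSeries.support_mul_subset hγ)
      have hma : m ≤ a := (support_sub_truncLT f m ha).2
      have hcb : c ≤ b := (support_sub_truncLT h c hb).2
      calc lam = m + (lam - m) := by abel
        _ ≤ a + b := add_le_add hma (le_trans hlamc hcb)
    have hkey : truncLT (f * h) lam = f₀ * h + truncLT (f₁ * h₀) lam := by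
      rw [hsplit, truncLT_add, truncLT_add, ht0, ht2, add_zero]
    -- closure properties of the new pair
    have hf₁1 : f₁ ∈ Subring.closure S := sub_mem hf1 (hf2 m)
    have hf₁2 : ∀ μ, truncLT f₁ μ ∈ Subring.closure S := by
      intro μ
      rw [hf₁, truncLT_sub, hf₀, truncLT_truncLT]
      exact sub_mem (hf2 μ) (hf2 (min m μ))
    have hh₀2 : ∀ μ, truncLT h₀ μ ∈ Subring.closure S := by
      intro μ
      rw [hh₀, truncLT_truncLT]
      exact hh2 (min c μ)
    refine Or.inr ⟨f₁, h₀, c, hch, hf₁1, hf₁2, hh2 c, hh₀2,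
      fun b hb => (support_truncLT h c hb).1, fun b hb => (support_truncLT h c hb).2, ?_⟩
    intro hmem
    rw [hkey]
    exact add_mem (mul_mem (hf2 m) hh1) hmem
  · -- all products land below `lam`
    left
    have : truncLT (f * h) lam = f * h := by
      apply truncLT_eq_self
      intro γ hγ
      obtain ⟨a, ha, b, hb, rfl⟩ := Set.mem_add.1 (HahnSeries.support_mul_subset hγ)
      by_contra hcon
      exact hB ⟨a, ha, b, hb, not_lt.1 hcon⟩
    rw [this]
    exact mul_mem hf1 hh1

/-- Truncations of products of trunc-closed closure elements stay in the closure. -/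
lemma trunc_mul_mem (lam : Γ) (f g : HahnSeries Γ A)
    (hf1 : f ∈ Subring.closure S) (hf2 : ∀ μ, truncLT f μ ∈ Subring.closure S)
    (hg1 : g ∈ Subring.closure S) (hg2 : ∀ μ, truncLT g μ ∈ Subring.closure S) :
    truncLT (f * g) lam ∈ Subring.closure S := by
  classical
  by_contra hcon
  set C : Set Γ := {c | c ∈ g.support ∧ ∃ f' h',
      (f' ∈ Subring.closure S) ∧ (∀ μ, truncLT f' μ ∈ Subring.closure S) ∧
      (h' ∈ Subring.closure S) ∧ (∀ μ, truncLT h' μ ∈ Subring.closure S) ∧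
      h'.support ⊆ g.support ∧ (∀ b ∈ h'.support, b < c) ∧
      truncLT (f' * h') lam ∉ Subring.closure S} with hC
  have hCwf : C.IsWF := g.isWF_support.mono (fun x hx => hx.1)
  have hCne : C.Nonempty := by
    rcases trunc_peel S lam f g hf1 hf2 hg1 hg2 with H | ⟨f', h', c, hc, h1, h2, h3, h4, h5, h6, h7⟩
    · exact absurd H hcon
    · exact ⟨c, hc, f', h', h1, h2, h3, h4, h5, h6, fun X => hcon (h7 X)⟩
  obtain ⟨hcg, f₂, h₂, p1, p2, p3, p4, p5, p6, p7⟩ := hCwf.min_mem hCne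
  rcases trunc_peel S lam f₂ h₂ p1 p2 p3 p4 with H | ⟨f₃, h₃, c₁, hc₁, q1, q2, q3, q4, q5, q6, q7⟩
  · exact p7 H
  · have hmem : c₁ ∈ C :=
      ⟨p5 hc₁, f₃, h₃, q1, q2, q3, q4, fun b hb => p5 (q5 hb), q6, fun X => p7 (q7 X)⟩
    exact hCwf.not_lt_min hCne hmem (p6 c₁ hc₁)

end TruncAux

/-- (Corollaire 5.4.) Let `S` be a set of generalized power series closed
under open truncation — such as the set of all truncations `u_{j'}(β')` with
`(j',β') ≤_lex (j,β)` generating the ring `𝒜_{j,β}[u_j(β)]`. If `g` lies in the subring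
generated by `S` and `λ ∈ Γ` with `v(g) < λ`, then the open truncation `g(λ)` again lies in
that subring. -/
theorem stmt16 {Γ A : Type*} [AddCommGroup Γ] [LinearOrder Γ] [IsOrderedAddMonoid Γ] [CommRing A] [IsDomain A]
    (S : Set (HahnSeries Γ A))
    (hS : ∀ f ∈ S, ∀ lam : Γ, truncLT f lam ∈ S)
    (g : HahnSeries Γ A) (hg : g ∈ Subring.closure S)
    (g0 : g ≠ 0) (lam : Γ) (hlt : g.order < lam) :
    truncLT g lam ∈ Subring.closure S := by
  have key : ∀ x (hx : x ∈ Subring.closure S), ∀ μ, truncLT x μ ∈ Subring.closure S := by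
    intro x hx
    induction hx using Subring.closure_induction with
    | mem x hx => exact fun μ => Subring.subset_closure (hS x hx μ)
    | zero => exact fun μ => by rw [truncLT_zero]; exact zero_mem _
    | one =>
      intro μ
      have hsupp : (1 : HahnSeries Γ A).support ⊆ {(0 : Γ)} := by
        intro γ hγ
        simp only [HahnSeries.mem_support, HahnSeries.coeff_one] at hγ
        by_contra hne
        simp only [Set.mem_singleton_iff] at hne
        exact hγ (if_neg hne)
      by_cases h0 : (0 : Γ) < μ
      · have : truncLT (1 : HahnSeries Γ A) μ = 1 :=
          truncLT_eq_self (fun γ hγ => by rw [Set.mem_singleton_iff.1 (hsupp hγ)]; exact h0)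
        rw [this]; exact one_mem _
      · have : truncLT (1 : HahnSeries Γ A) μ = 0 :=
          truncLT_eq_zero (fun γ hγ => by
            rw [Set.mem_singleton_iff.1 (hsupp hγ)]; exact not_lt.1 h0)
        rw [this]; exact zero_mem _
    | add x y hx hy px py => exact fun μ => by rw [truncLT_add]; exact add_mem (px μ) (py μ)
    | neg x hx px =>
      intro μ
      have hnx : -x = (0 : HahnSeries Γ A) - x := by abel
      rw [hnx, truncLT_sub, truncLT_zero]
      exact sub_mem (zero_mem _) (px μ)
    | mul x y hx hy px py => exact fun μ => trunc_mul_mem S μ x y hx px hy py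
  exact key g hg lam
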